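/- Assume every subset of 2^ω has the Baire property, and let (f_η)_{η ∈ I} be a family of functions f_η : 2^ω → [0,1] indexed by a set I, such that the meager ideal is closed under well-ordered unions and I is well-orderable. Then there is a single comeager set D ⊆ 2^ω such that every f_η is continuous on D. -/
import Mathlib


/-- The Cantor space `2^ω`. -/
abbrev CantorB := ℕ → Bool

/-- A set has the Baire property if it differs from an open set by a meager set. -/
def HasBaireProperty (A : Set CantorB) : Prop :=
  ∃ U : Set CantorB, IsOpen U ∧ IsMeagre (symmDiff A U)

/-- If every set has the Baire property, then any `g : 2^ω → ℝ` is continuous on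
some comeager set. -/
lemma exists_comeager_continuousOn
    (hBP : ∀ A : Set CantorB, HasBaireProperty A) (g : CantorB → ℝ) :
    ∃ D : Set CantorB, IsMeagre Dᶜ ∧ ContinuousOn g D := by
  obtain ⟨b, hbc, -, hb⟩ := TopologicalSpace.exists_countable_basis ℝ
  -- for each basic open set, get an open set witnessing the Baire property
  choose U hUopen hUmeag using fun V : b => hBP (g ⁻¹' (V : Set ℝ))
  refine ⟨⋂ V : b, (symmDiff (g ⁻¹' (V : Set ℝ)) (U V))ᶜ, ?_, ?_⟩
  · rw [Set.compl_iInter]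
    haveI : Countable b := hbc.to_subtype
    rw [IsMeagre]
    simp only [Set.compl_iUnion, compl_compl]
    exact countable_iInter_mem.2 fun V => (hUmeag V)
  · intro x hx
    rw [ContinuousWithinAt, (nhds_basis_opens (g x)).tendsto_right_iff]
    rintro W ⟨hgxW, hWopen⟩
    obtain ⟨V, hVb, hgxV, hVW⟩ := hb.exists_subset_of_mem_open hgxW hWopen
    have hxD : ∀ V : b, x ∉ symmDiff (g ⁻¹' (V : Set ℝ)) (U V) :=
      fun V => Set.mem_iInter.1 hx V
    have hxU : x ∈ U ⟨V, hVb⟩ := by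
      have := hxD ⟨V, hVb⟩
      by_contra hxU
      exact this (Or.inl ⟨hgxV, hxU⟩)
    filter_upwards [mem_nhdsWithin.2 ⟨U ⟨V, hVb⟩, hUopen _, hxU,
      Set.Subset.rfl⟩] with y hy
    obtain ⟨hyU, hyD⟩ := hy
    have hyD' : y ∉ symmDiff (g ⁻¹' (V : Set ℝ)) (U ⟨V, hVb⟩) := by
      have := Set.mem_iInter.1 hyD ⟨V, hVb⟩
      exact this
    have : y ∈ g ⁻¹' (V : Set ℝ) := by
      by_contra hyV
      exact hyD' (Or.inr ⟨hyU, hyV⟩)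
    exact hVW this

/-- Assume every subset of `2^ω` has the Baire property and the meager ideal is closed
under well-ordered unions.  Then for any well-orderable index set `I` and any family
`f_η : 2^ω → [0,1]` (`η ∈ I`), there is a single comeager set `D` on which every `f_η` is
continuous. -/
theorem common_comeager_continuity_set
    {I : Type}
    (hBP : ∀ A : Set CantorB, HasBaireProperty A)
    (hUnion : ∀ (γ : Ordinal) (B : {o : Ordinal // o < γ} → Set CantorB),
        (∀ j, IsMeagre (B j)) → IsMeagre (⋃ j, B j))
    (hwo : ∃ r : I → I → Prop, IsWellOrder I r)
    (f : I → CantorB → ℝ)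
    (hf : ∀ η x, f η x ∈ Set.Icc (0 : ℝ) 1) :
    ∃ D : Set CantorB, IsMeagre Dᶜ ∧ ∀ η, ContinuousOn (f η) D := by
  obtain ⟨r, hr⟩ := hwo
  haveI := hr
  choose D hDmeag hDcont using fun η => exists_comeager_continuousOn hBP (f η)
  set γ := Ordinal.lift (Ordinal.type r) with hγ
  have idx : ∀ j : {o : Ordinal // o < γ}, ∃ η : I, Ordinal.lift (Ordinal.typein r η) = j.1 := by
    rintro ⟨o, ho⟩
    obtain ⟨o', ho', rfl⟩ := Ordinal.lt_lift_iff.1 ho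
    exact ⟨Ordinal.enum r ⟨o', ho'⟩, by simp⟩
  choose ι hι using idx
  set B : {o : Ordinal // o < γ} → Set CantorB := fun j => (D (ι j))ᶜ
  have hBmeag : ∀ j, IsMeagre (B j) := fun j => hDmeag _
  refine ⟨(⋃ j, B j)ᶜ, by simpa using hUnion γ B hBmeag, fun η => ?_⟩
  have hsub : (⋃ j, B j)ᶜ ⊆ D η := by
    intro x hx
    by_contra hxD
    refine hx (Set.mem_iUnion.2 ⟨⟨Ordinal.lift (Ordinal.typein r η), ?_⟩, ?_⟩)
    · exact Ordinal.lift_lt.2 (Ordinal.typein_lt_type r η)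
    · have h1 := hι ⟨Ordinal.lift (Ordinal.typein r η),
        Ordinal.lift_lt.2 (Ordinal.typein_lt_type r η)⟩
      have h2 : ι ⟨Ordinal.lift (Ordinal.typein r η),
          Ordinal.lift_lt.2 (Ordinal.typein_lt_type r η)⟩ = η := by
        have h1' : Ordinal.lift.{u_1, 0} (Ordinal.typein r (ι _)) =
            Ordinal.lift.{u_1, 0} (Ordinal.typein r η) := h1
        exact Ordinal.typein_injective r (Ordinal.lift_inj.1 h1')
      simpa [B, h2] using hxD
  exact (hDcont η).mono hsub
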